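/- Let n ≥ 2, 1 ≤ k ≤ n-1 be integers and A_k > 0, η₀ > 0 constants. Suppose φ: [0,T) → ℝ is C¹ with φ(0) = 0 and φ'(r) ≥ r·(A_k⁻¹·e^(φ(r))·η₀)^(1/k) for all r ∈ [0,T). Then T ≤ (2k·(A_k/η₀)^(1/k))^(1/2); i.e., the maximal existence interval is finite (blow-up in finite 'time'). -/

import Mathlib

theorem stmt_7 (n k : ℕ) (hn : 2 ≤ n) (hk1 : 1 ≤ k) (hkn : k ≤ n - 1)
    (Ak η₀ : ℝ) (hAk : 0 < Ak) (hη₀ : 0 < η₀)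
    (T : ℝ) (hT : 0 < T) (φ φd : ℝ → ℝ) (hφ0 : φ 0 = 0)
    (hderiv : ∀ r ∈ Set.Ico (0 : ℝ) T, HasDerivAt φ (φd r) r)
    (hge : ∀ r ∈ Set.Ico (0 : ℝ) T,
      r * (Ak⁻¹ * Real.exp (φ r) * η₀) ^ ((1 : ℝ) / k) ≤ φd r) :
    T ≤ Real.sqrt (2 * k * (Ak / η₀) ^ ((1 : ℝ) / k)) := by
  have hkpos : (0:ℝ) < k := by exact_mod_cast hk1
  have hkne : (k:ℝ) ≠ 0 := ne_of_gt hkpos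
  set c : ℝ := (η₀ / Ak) ^ ((1:ℝ)/k) with hc
  have hcpos : 0 < c := Real.rpow_pos_of_pos (div_pos hη₀ hAk) _
  -- rewrite the lower bound
  have hge' : ∀ r ∈ Set.Ico (0:ℝ) T, r * (c * Real.exp (φ r / k)) ≤ φd r := by
    intro r hr
    have h := hge r hr
    have h1 : (Ak⁻¹ * Real.exp (φ r) * η₀) = (η₀/Ak) * Real.exp (φ r) := by
      field_simp
    rw [h1, Real.mul_rpow (div_pos hη₀ hAk).le (Real.exp_pos _).le,
      ← Real.exp_mul] at h
    have : φ r * ((1:ℝ)/k) = φ r / k := by ring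
    rwa [this] at h
  -- the comparison function
  set F : ℝ → ℝ := fun r => (k:ℝ) * (1 - Real.exp (-(φ r)/k)) - c * r^2/2 with hF
  have hFd : ∀ r ∈ Set.Ico (0:ℝ) T,
      HasDerivAt F (Real.exp (-(φ r)/k) * φd r - c * r) r := by
    intro r hr
    have h1 : HasDerivAt (fun s => -(φ s)/(k:ℝ)) (-(φd r)/k) r :=
      ((hderiv r hr).neg).div_const _
    have h2 : HasDerivAt (fun s => Real.exp (-(φ s)/k))
        (Real.exp (-(φ r)/k) * (-(φd r)/k)) r := h1.exp
    have h3 : HasDerivAt (fun s => (k:ℝ) * (1 - Real.exp (-(φ s)/k)))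
        ((k:ℝ) * (0 - Real.exp (-(φ r)/k) * (-(φd r)/k))) r :=
      ((hasDerivAt_const r (1:ℝ)).sub h2).const_mul _
    have h4 : HasDerivAt (fun s : ℝ => c * s^2/2) (c * (2*r)/2) r := by
      simpa using (((hasDerivAt_pow 2 r).const_mul c).div_const 2)
    have := h3.sub h4
    convert this using 1
    · rfl
    · rfl
    · rfl
    have hkk : (k:ℝ) * (k:ℝ)⁻¹ = 1 := mul_inv_cancel₀ hkne
    linear_combination (-(Real.exp (-(φ r)/k) * φd r)) * hkk
  have key : ∀ ρ ∈ Set.Ico (0:ℝ) T, c * ρ^2 / 2 ≤ (k:ℝ) * (1 - Real.exp (-(φ ρ)/k)) := by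
    intro ρ hρ
    have hsub : Set.Icc (0:ℝ) ρ ⊆ Set.Ico 0 T := fun x hx =>
      ⟨hx.1, lt_of_le_of_lt hx.2 hρ.2⟩
    have hmono : MonotoneOn F (Set.Icc 0 ρ) := by
      apply monotoneOn_of_hasDerivWithinAt_nonneg (convex_Icc _ _)
        (f' := fun r => Real.exp (-(φ r)/k) * φd r - c * r)
      · intro x hx
        exact ((hFd x (hsub hx)).continuousAt).continuousWithinAt
      · intro x hx
        have hx' : x ∈ Set.Icc (0:ℝ) ρ := interior_subset hx
        exact (hFd x (hsub hx')).hasDerivWithinAt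
      · intro x hx
        have hx' : x ∈ Set.Icc (0:ℝ) ρ := interior_subset hx
        have hxm := hsub hx'
        have h := hge' x hxm
        have hxnn : 0 ≤ x := hx'.1
        have e0 : -(φ x)/(k:ℝ) + φ x / k = 0 := by ring
        have e1 : Real.exp (-(φ x)/k) * Real.exp (φ x / k) = 1 := by
          rw [← Real.exp_add, e0, Real.exp_zero]
        have h2 : Real.exp (-(φ x)/k) * (x * (c * Real.exp (φ x / k))) = c * x := by
          rw [show Real.exp (-(φ x)/k) * (x * (c * Real.exp (φ x / k)))
              = (Real.exp (-(φ x)/k) * Real.exp (φ x / k)) * (c * x) by ring, e1, one_mul]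
        have h3 := mul_le_mul_of_nonneg_left h (Real.exp_pos (-(φ x)/k)).le
        rw [h2] at h3
        linarith
    have := hmono (Set.left_mem_Icc.mpr hρ.1) (Set.right_mem_Icc.mpr hρ.1) hρ.1
    simp only [hF, hφ0] at this
    simp only [neg_zero, zero_div, Real.exp_zero, sub_self, mul_zero] at this
    linarith [this]
  -- conclude
  by_contra hcon
  push_neg at hcon
  set S := 2 * (k:ℝ) * (Ak / η₀) ^ ((1:ℝ)/k) with hS
  have hinv : (Ak / η₀) ^ ((1:ℝ)/k) * c = 1 := by
    rw [hc, ← Real.mul_rpow (div_pos hAk hη₀).le (div_pos hη₀ hAk).le]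
    rw [div_mul_div_comm]
    rw [mul_comm η₀ Ak, div_self (by positivity)]
    simp
  have hSpos : 0 < S := by positivity
  set ρ := Real.sqrt S with hρ
  have hρmem : ρ ∈ Set.Ico (0:ℝ) T := ⟨Real.sqrt_nonneg _, hcon⟩
  have hρ2 : ρ^2 = S := Real.sq_sqrt hSpos.le
  have hk := key ρ hρmem
  rw [hρ2] at hk
  have hck : c * S / 2 = k := by
    rw [hS]
    field_simp
    nlinarith [hinv]
  rw [hck] at hk
  have hexp : 0 < Real.exp (-(φ ρ)/k) := Real.exp_pos _
  nlinarith [hk, hexp, hkpos]
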